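/- Let T be a tree with diametrical path v₀,...,v_d and subtrees T_i as defined. If for some i ∈ {2,...,d−2}, T_i has an independent set of cardinality 2 that does not dominate v_i, then Γ_b(T) > diam(T). -/

import Mathlib

namespace AJC

variable {V : Type*}

/-- Eccentricity of a vertex: max distance to any vertex. -/
noncomputable def ecc [Fintype V] (G : SimpleGraph V) (v : V) : ℕ :=
  Finset.univ.sup (fun u => G.dist v u)

/-- Diameter: max eccentricity. -/
noncomputable def diam [Fintype V] (G : SimpleGraph V) : ℕ :=
  Finset.univ.sup (fun v => ecc G v)

/-- Radius: minimum eccentricity. -/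
noncomputable def rad [Fintype V] (G : SimpleGraph V) : ℕ :=
  sInf (Set.range (ecc G))

/-- A broadcast on `G`. -/
def IsBroadcast [Fintype V] (G : SimpleGraph V) (f : V → ℕ) : Prop :=
  ∀ v, f v ≤ ecc G v

/-- `u` hears the broadcast `f` (is dominated by `f`). -/
def Hears (G : SimpleGraph V) (f : V → ℕ) (u : V) : Prop :=
  ∃ v, 1 ≤ f v ∧ G.dist v u ≤ f v

/-- A dominating broadcast. -/
def IsDomBroadcast [Fintype V] (G : SimpleGraph V) (f : V → ℕ) : Prop :=
  IsBroadcast G f ∧ ∀ u, Hears G f u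

/-- A minimal dominating broadcast: no strictly smaller broadcast is dominating. -/
def IsMinDomBroadcast [Fintype V] (G : SimpleGraph V) (f : V → ℕ) : Prop :=
  IsDomBroadcast G f ∧ ∀ f' : V → ℕ, f' < f → ¬ IsDomBroadcast G f'

/-- The cost of a broadcast. -/
def cost [Fintype V] (f : V → ℕ) : ℕ := ∑ v, f v

/-- The upper broadcast domination number `Γ_b`. -/
noncomputable def upperBroadcastNum [Fintype V] (G : SimpleGraph V) : ℕ :=
  sSup {n | ∃ f : V → ℕ, IsMinDomBroadcast G f ∧ cost f = n}

/-- The broadcast domination number `γ_b`. -/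
noncomputable def broadcastNum [Fintype V] (G : SimpleGraph V) : ℕ :=
  sInf {n | ∃ f : V → ℕ, IsDomBroadcast G f ∧ cost f = n}

/-- The `f`-neighbourhood of `v`. -/
def Nf (G : SimpleGraph V) (f : V → ℕ) (v : V) : Set V := {u | G.dist v u ≤ f v}

/-- The `f`-boundary of `v`. -/
def Bf (G : SimpleGraph V) (f : V → ℕ) (v : V) : Set V := {u | G.dist v u = f v}

/-- The `f`-private neighbourhood of `v`. -/
def PN (G : SimpleGraph V) (f : V → ℕ) (v : V) : Set V :=
  {u | G.dist v u ≤ f v ∧ ∀ w, w ≠ v → 1 ≤ f w → ¬ G.dist w u ≤ f w}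

/-- The `f`-private boundary of `v`: vertices in `N_f[v]` not dominated once the
broadcast at `v` is decreased by one. -/
def PB [DecidableEq V] (G : SimpleGraph V) (f : V → ℕ) (v : V) : Set V :=
  {u | G.dist v u ≤ f v ∧ ¬ Hears G (Function.update f v (f v - 1)) u}

/-- A dominating set of vertices. -/
def IsDomSet (G : SimpleGraph V) (S : Finset V) : Prop :=
  ∀ v, v ∈ S ∨ ∃ u ∈ S, G.Adj u v

/-- A minimal dominating set. -/
def IsMinDomSet (G : SimpleGraph V) (S : Finset V) : Prop :=
  IsDomSet G S ∧ ∀ T ⊂ S, ¬ IsDomSet G T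

/-- An independent set of vertices. -/
def IsIndepSet (G : SimpleGraph V) (S : Finset V) : Prop :=
  ∀ u ∈ S, ∀ w ∈ S, u ≠ w → ¬ G.Adj u w

/-- The upper domination number `Γ`. -/
noncomputable def upperDomNum [Fintype V] (G : SimpleGraph V) : ℕ :=
  sSup {n | ∃ S : Finset V, IsMinDomSet G S ∧ S.card = n}

/-- The domination number `γ`. -/
noncomputable def domNum [Fintype V] (G : SimpleGraph V) : ℕ :=
  sInf {n | ∃ S : Finset V, IsDomSet G S ∧ S.card = n}

/-- The independence number `α`. -/
noncomputable def indepNum [Fintype V] (G : SimpleGraph V) : ℕ :=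
  sSup {n | ∃ S : Finset V, IsIndepSet G S ∧ S.card = n}

/-- Given a diametrical path `v 0, …, v d` of a tree, `sideTree G d v i` is the set of
vertices connected to `v i` by a path internally disjoint from the diametrical path. -/
def sideTree (G : SimpleGraph V) (d : ℕ) (v : ℕ → V) (i : ℕ) : Set V :=
  {x | ∃ p : G.Walk x (v i), p.IsPath ∧ ∀ y ∈ p.support, y ≠ v i → ∀ j ≤ d, v j ≠ y}

/-- The diameter of the subtree `T_i`. -/
noncomputable def sideDiam (G : SimpleGraph V) (d : ℕ) (v : ℕ → V) (i : ℕ) : ℕ :=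
  sSup {n | ∃ x ∈ sideTree G d v i, ∃ y ∈ sideTree G d v i, G.dist x y = n}

/-- The eccentricity of a vertex `x` within the subtree `T_i`. -/
noncomputable def sideEcc (G : SimpleGraph V) (d : ℕ) (v : ℕ → V) (i : ℕ) (x : V) : ℕ :=
  sSup {n | ∃ y ∈ sideTree G d v i, G.dist x y = n}

/-- A leaf of `G`. -/
def IsLeaf [Fintype V] (G : SimpleGraph V) [DecidableRel G.Adj] (x : V) : Prop :=
  G.degree x = 1

/-- A stem: a vertex adjacent to a leaf. -/
def IsStem [Fintype V] (G : SimpleGraph V) [DecidableRel G.Adj] (x : V) : Prop :=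
  ∃ l, IsLeaf G l ∧ G.Adj x l

/-- A strong stem: a vertex adjacent to at least two leaves. -/
def IsStrongStem [Fintype V] (G : SimpleGraph V) [DecidableRel G.Adj] (x : V) : Prop :=
  ∃ l₁ l₂, l₁ ≠ l₂ ∧ IsLeaf G l₁ ∧ IsLeaf G l₂ ∧ G.Adj x l₁ ∧ G.Adj x l₂


section AuxLemmas

lemma tree_walk_length {G : SimpleGraph V} (hT : G.IsTree) {x y : V}
    (p : G.Walk x y) (hp : p.IsPath) : p.length = G.dist x y := by
  obtain ⟨q, hq, hql⟩ := hT.isConnected.exists_path_of_dist x y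
  rw [(hT.existsUnique_path x y).unique hp hq, hql]

lemma exists_path_walk {G : SimpleGraph V} {d : ℕ} {v : ℕ → V}
    (hadj : ∀ i < d, G.Adj (v i) (v (i + 1))) :
    ∀ (n j : ℕ), j + n ≤ d → ∃ p : G.Walk (v j) (v (j + n)),
      p.support = (List.range (n + 1)).map (fun m => v (j + m)) := by
  intro n
  induction n with
  | zero => intro j hj; exact ⟨SimpleGraph.Walk.nil, by simp [List.range_succ]⟩
  | succ n ih =>
    intro j hj
    obtain ⟨q, hq⟩ := ih (j + 1) (by omega)
    have hadj' : G.Adj (v j) (v (j + 1)) := hadj j (by omega)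
    refine ⟨(SimpleGraph.Walk.cons hadj' q).copy rfl (congrArg v (by omega)), ?_⟩
    rw [SimpleGraph.Walk.support_copy, SimpleGraph.Walk.support_cons, hq]
    conv_rhs => rw [List.range_succ_eq_map]
    simp only [List.map_cons, List.map_map]
    refine congrArg₂ _ rfl ?_
    apply List.map_congr_left
    intro m _
    show v (j + 1 + m) = v (j + (m + 1))
    exact congrArg v (by omega)

lemma exists_nice_path_walk {G : SimpleGraph V} {d : ℕ} {v : ℕ → V}
    (hadj : ∀ i < d, G.Adj (v i) (v (i + 1)))
    (hinj : ∀ i ≤ d, ∀ j ≤ d, v i = v j → i = j)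
    {i k : ℕ} (hi : i ≤ d) (hk : k ≤ d) :
    ∃ q : G.Walk (v i) (v k), q.IsPath ∧ q.length = (k - i) + (i - k) ∧
      (∀ y ∈ q.support, ∃ m, m ≤ d ∧ y = v m) := by
  have key : ∀ (j n : ℕ), j + n ≤ d → ∃ q : G.Walk (v j) (v (j + n)), q.IsPath ∧
      q.length = n ∧ (∀ y ∈ q.support, ∃ m, m ≤ d ∧ y = v m) := by
    intro j n hjn
    obtain ⟨p, hp⟩ := exists_path_walk hadj n j hjn
    have hnodup : p.support.Nodup := by
      rw [hp]
      refine List.Nodup.map_on ?_ List.nodup_range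
      intro x hx y hy hxy
      rw [List.mem_range] at hx hy
      have := hinj (j + x) (by omega) (j + y) (by omega) hxy
      omega
    have hlen : p.length = n := by
      have h1 : p.support.length = p.length + 1 := SimpleGraph.Walk.length_support p
      rw [hp] at h1
      simp at h1
      omega
    refine ⟨p, (SimpleGraph.Walk.isPath_def p).2 hnodup, hlen, ?_⟩
    intro y hy
    rw [hp, List.mem_map] at hy
    obtain ⟨m, hm, rfl⟩ := hy
    rw [List.mem_range] at hm
    exact ⟨j + m, by omega, rfl⟩
  rcases le_total i k with h | h
  · obtain ⟨q, hq1, hq2, hq3⟩ := key i (k - i) (by omega)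
    refine ⟨q.copy rfl (congrArg v (by omega)), ?_, ?_, ?_⟩
    · rwa [SimpleGraph.Walk.isPath_copy]
    · rw [SimpleGraph.Walk.length_copy, hq2]; omega
    · intro y hy; rw [SimpleGraph.Walk.support_copy] at hy; exact hq3 y hy
  · obtain ⟨q, hq1, hq2, hq3⟩ := key k (i - k) (by omega)
    refine ⟨(q.copy rfl (congrArg v (by omega))).reverse, ?_, ?_, ?_⟩
    · rw [SimpleGraph.Walk.isPath_reverse_iff, SimpleGraph.Walk.isPath_copy]; exact hq1
    · rw [SimpleGraph.Walk.length_reverse, SimpleGraph.Walk.length_copy, hq2]; omega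
    · intro y hy
      rw [SimpleGraph.Walk.support_reverse, List.mem_reverse,
        SimpleGraph.Walk.support_copy] at hy
      exact hq3 y hy

lemma dist_path_vertices {G : SimpleGraph V} {d : ℕ} {v : ℕ → V}
    (hT : G.IsTree) (hadj : ∀ i < d, G.Adj (v i) (v (i + 1)))
    (hinj : ∀ i ≤ d, ∀ j ≤ d, v i = v j → i = j)
    {i k : ℕ} (hi : i ≤ d) (hk : k ≤ d) :
    G.dist (v i) (v k) = (k - i) + (i - k) := by
  obtain ⟨q, hq1, hq2, _⟩ := exists_nice_path_walk hadj hinj hi hk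
  rw [← tree_walk_length hT q hq1, hq2]

lemma side_dist {G : SimpleGraph V} {d : ℕ} {v : ℕ → V}
    (hT : G.IsTree) (hadj : ∀ i < d, G.Adj (v i) (v (i + 1)))
    (hinj : ∀ i ≤ d, ∀ j ≤ d, v i = v j → i = j)
    {i : ℕ} (hi : i ≤ d) {x : V} (hx : x ∈ sideTree G d v i)
    {k : ℕ} (hk : k ≤ d) :
    G.dist x (v k) = G.dist x (v i) + ((k - i) + (i - k)) := by
  obtain ⟨p, hp, hav⟩ := hx
  obtain ⟨q, hq1, hq2, hq3⟩ := exists_nice_path_walk hadj hinj hi hk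
  have hqsup : q.support = v i :: q.support.tail := q.support_eq_cons
  have hvi_tail : v i ∉ q.support.tail := by
    have := (SimpleGraph.Walk.isPath_def q).1 hq1
    rw [hqsup, List.nodup_cons] at this
    exact this.1
  have hdisj : p.support.Disjoint q.support.tail := by
    intro y hyp hyt
    have hymem : y ∈ q.support := by rw [hqsup]; exact List.mem_cons_of_mem _ hyt
    obtain ⟨m, hm, rfl⟩ := hq3 y hymem
    have hyne : v m ≠ v i := by rintro h; rw [h] at hyt; exact hvi_tail hyt
    exact hav (v m) hyp hyne m hm rfl
  have hnodup : (p.append q).support.Nodup := by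
    rw [SimpleGraph.Walk.support_append]
    refine List.Nodup.append ((SimpleGraph.Walk.isPath_def p).1 hp) ?_ hdisj
    exact ((SimpleGraph.Walk.isPath_def q).1 hq1).sublist (List.tail_sublist _)
  have hlen := tree_walk_length hT (p.append q) ((SimpleGraph.Walk.isPath_def _).2 hnodup)
  rw [SimpleGraph.Walk.length_append] at hlen
  rw [← hlen, tree_walk_length hT p hp, hq2]

lemma cost_lt_of_lt [Fintype V] {f g : V → ℕ} (h : f < g) : cost f < cost g := by
  rw [Pi.lt_def] at h
  obtain ⟨hle, j, hj⟩ := h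
  exact Finset.sum_lt_sum (fun x _ => hle x) ⟨j, Finset.mem_univ j, hj⟩

lemma exists_min_dom_le [Fintype V] (G : SimpleGraph V) :
    ∀ (n : ℕ) (f : V → ℕ), cost f ≤ n → IsDomBroadcast G f →
    ∃ g : V → ℕ, (∀ z, g z ≤ f z) ∧ IsMinDomBroadcast G g := by
  intro n
  induction n with
  | zero =>
    intro f hc hf
    by_cases hmin : IsMinDomBroadcast G f
    · exact ⟨f, fun z => le_rfl, hmin⟩
    · exfalso
      have h1 : ¬ ∀ f' : V → ℕ, f' < f → ¬ IsDomBroadcast G f' := fun h => hmin ⟨hf, h⟩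
      push_neg at h1
      obtain ⟨f', hlt, hdom⟩ := h1
      have := cost_lt_of_lt hlt
      omega
  | succ n ih =>
    intro f hc hf
    by_cases hmin : IsMinDomBroadcast G f
    · exact ⟨f, fun z => le_rfl, hmin⟩
    · have h1 : ¬ ∀ f' : V → ℕ, f' < f → ¬ IsDomBroadcast G f' := fun h => hmin ⟨hf, h⟩
      push_neg at h1
      obtain ⟨f', hlt, hdom⟩ := h1
      have hlt' := cost_lt_of_lt hlt
      obtain ⟨g, hg1, hg2⟩ := ih f' (by omega) hdom
      exact ⟨g, fun z => (hg1 z).trans ((Pi.lt_def.1 hlt).1 z), hg2⟩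

lemma aux_main {V : Type*} [Fintype V] [DecidableEq V] (G : SimpleGraph V)
    [DecidableRel G.Adj] (hT : G.IsTree) (d : ℕ) (v : ℕ → V)
    (hdiam : diam G = d)
    (hadj : ∀ i < d, G.Adj (v i) (v (i + 1)))
    (hinj : ∀ i ≤ d, ∀ j ≤ d, v i = v j → i = j)
    (i : ℕ) (hid : i ≤ d) (a b : V)
    (hA : a ∈ sideTree G d v i) (hB : b ∈ sideTree G d v i)
    (hnadj : ¬ G.Adj a b) (hne : a ≠ b)
    (ha2 : 2 ≤ G.dist a (v i)) (hb2 : 2 ≤ G.dist b (v i))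
    (hle : G.dist a (v i) ≤ G.dist b (v i)) :
    diam G < upperBroadcastNum G := by
  classical
  have hconn := hT.isConnected
  have hDa : ∀ k, k ≤ d → G.dist a (v k) = G.dist a (v i) + ((k - i) + (i - k)) :=
    fun k hk => side_dist hT hadj hinj hid hA hk
  have hDb : ∀ k, k ≤ d → G.dist b (v k) = G.dist b (v i) + ((k - i) + (i - k)) :=
    fun k hk => side_dist hT hadj hinj hid hB hk
  have hdv : ∀ j k, j ≤ d → k ≤ d → G.dist (v j) (v k) = (k - j) + (j - k) :=
    fun j k hj hk => dist_path_vertices hT hadj hinj hj hk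
  have hdle : ∀ x y : V, G.dist x y ≤ d := by
    intro x y
    have h1 : G.dist x y ≤ ecc G x := Finset.le_sup (Finset.mem_univ y)
    have h2 : ecc G x ≤ diam G := Finset.le_sup (Finset.mem_univ x)
    omega
  have hiad : i + G.dist a (v i) ≤ d := by
    have h1 := hDa 0 (by omega)
    have h2 := hdle a (v 0)
    omega
  have hαi : G.dist a (v i) ≤ i := by
    have h1 := hDa d le_rfl
    have h2 := hdle a (v d)
    omega
  have hv0d : v 0 ≠ v d := by
    intro h
    have := hinj 0 (by omega) d le_rfl h
    omega
  have hav : ∀ k, k ≤ d → a ≠ v k := by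
    intro k hk h
    have h1 := hDa k hk
    rw [← h, SimpleGraph.dist_self] at h1
    omega
  have hbv : ∀ k, k ≤ d → b ≠ v k := by
    intro k hk h
    have h1 := hDb k hk
    rw [← h, SimpleGraph.dist_self] at h1
    omega
  have hnadja : ∀ k, k ≤ d → ¬ G.Adj a (v k) := by
    intro k hk h
    have h1 : G.dist a (v k) = 1 := SimpleGraph.dist_eq_one_iff_adj.2 h
    have h2 := hDa k hk
    omega
  have hnadjb : ∀ k, k ≤ d → ¬ G.Adj b (v k) := by
    intro k hk h
    have h1 : G.dist b (v k) = 1 := SimpleGraph.dist_eq_one_iff_adj.2 h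
    have h2 := hDb k hk
    omega
  have hab2 : 2 ≤ G.dist a b := by
    have h0 : G.dist a b ≠ 0 := fun h => hne ((hconn.dist_eq_zero_iff).1 h)
    have h1 : G.dist a b ≠ 1 := fun h => hnadj (SimpleGraph.dist_eq_one_iff_adj.1 h)
    omega
  have hrne : (Finset.range (d + 1)).Nonempty := ⟨0, Finset.mem_range.2 (Nat.succ_pos d)⟩
  set U : V → ℕ := fun z => (Finset.range (d + 1)).inf' hrne (fun k => G.dist z (v k)) with hU
  have hUle : ∀ z k, k ≤ d → U z ≤ G.dist z (v k) := by
    intro z k hk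
    exact Finset.inf'_le _ (Finset.mem_range.2 (by omega))
  have hUattain : ∀ z : V, ∃ k, k ≤ d ∧ G.dist z (v k) = U z := by
    intro z
    obtain ⟨k, hk, hke⟩ := Finset.exists_mem_eq_inf' hrne (fun k => G.dist z (v k))
    refine ⟨k, ?_, hke.symm⟩
    have := Finset.mem_range.1 hk
    omega
  set cap : V → ℕ := fun z =>
    if z = v 0 then i + G.dist a (v i) - 1
    else if z = v d then (d - i) + G.dist a (v i) - 1
    else if z = a ∨ z = b then 1
    else if G.Adj z a ∧ G.Adj z b then 0
    else if ∃ k, k ≤ d ∧ z = v k then 0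
    else U z - 1
    with hcap
  have cap_v0 : cap (v 0) = i + G.dist a (v i) - 1 := by
    simp only [hcap]; simp
  have cap_vd : cap (v d) = (d - i) + G.dist a (v i) - 1 := by
    simp only [hcap]; rw [if_neg (fun h => hv0d h.symm)]; simp
  have cap_a : cap a = 1 := by
    simp only [hcap]
    rw [if_neg (hav 0 (by omega)), if_neg (hav d le_rfl)]; simp
  have cap_b : cap b = 1 := by
    simp only [hcap]
    rw [if_neg (hbv 0 (by omega)), if_neg (hbv d le_rfl)]; simp
  have cap_w : ∀ z, G.Adj z a → G.Adj z b → cap z = 0 := by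
    intro z h1 h2
    have hz0 : z ≠ v 0 := by rintro rfl; exact hnadja 0 (by omega) h1.symm
    have hzd : z ≠ v d := by rintro rfl; exact hnadja d le_rfl h1.symm
    have hza : z ≠ a := by rintro rfl; exact hnadj h2
    have hzb : z ≠ b := by rintro rfl; exact hnadj h1.symm
    simp only [hcap]
    rw [if_neg hz0, if_neg hzd, if_neg (by rintro (h | h); exact hza h; exact hzb h),
      if_pos ⟨h1, h2⟩]
  have cap_mid : ∀ m, m ≤ d → m ≠ 0 → m ≠ d → cap (v m) = 0 := by
    intro m hm h0 hd'
    have h1 : v m ≠ v 0 := fun h => h0 (hinj m hm 0 (by omega) h)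
    have h2 : v m ≠ v d := fun h => hd' (hinj m hm d le_rfl h)
    have h3 : ¬(v m = a ∨ v m = b) := by
      rintro (h | h)
      · exact hav m hm h.symm
      · exact hbv m hm h.symm
    have h4 : ¬(G.Adj (v m) a ∧ G.Adj (v m) b) := fun h => hnadja m hm h.1.symm
    simp only [hcap]
    rw [if_neg h1, if_neg h2, if_neg h3, if_neg h4, if_pos ⟨m, hm, rfl⟩]
  have cap_far : ∀ z, (¬ ∃ k, k ≤ d ∧ z = v k) → z ≠ a → z ≠ b →
      ¬(G.Adj z a ∧ G.Adj z b) → cap z = U z - 1 := by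
    intro z h1 h2 h3 h4
    have hz0 : z ≠ v 0 := fun h => h1 ⟨0, by omega, h⟩
    have hzd : z ≠ v d := fun h => h1 ⟨d, le_rfl, h⟩
    simp only [hcap]
    rw [if_neg hz0, if_neg hzd, if_neg (by rintro (h | h); exact h2 h; exact h3 h),
      if_neg h4, if_neg h1]
  have hU1 : ∀ z, (¬ ∃ k, k ≤ d ∧ z = v k) → 1 ≤ U z := by
    intro z h
    by_contra h'
    obtain ⟨k, hk, hke⟩ := hUattain z
    have h0 : G.dist z (v k) = 0 := by omega
    exact h ⟨k, hk, (hconn.dist_eq_zero_iff).1 h0⟩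
  have hecc : ∀ (x : V) (k : ℕ), k ≤ d → G.dist x (v k) ≤ ecc G x :=
    fun x k _ => Finset.le_sup (Finset.mem_univ (v k))
  -- cap is a broadcast
  have hbc : IsBroadcast G cap := by
    intro z
    by_cases h0 : z = v 0
    · rw [h0, cap_v0]
      have h1 := hecc (v 0) d le_rfl
      rw [hdv 0 d (by omega) le_rfl] at h1
      omega
    by_cases hd' : z = v d
    · rw [hd', cap_vd]
      have h1 := hecc (v d) 0 (by omega)
      rw [hdv d 0 le_rfl (by omega)] at h1
      omega
    by_cases hA' : z = a
    · rw [hA', cap_a]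
      have h1 := hecc a i hid
      omega
    by_cases hB' : z = b
    · rw [hB', cap_b]
      have h1 := hecc b i hid
      omega
    by_cases hW : G.Adj z a ∧ G.Adj z b
    · rw [cap_w z hW.1 hW.2]; exact Nat.zero_le _
    by_cases hP : ∃ k, k ≤ d ∧ z = v k
    · obtain ⟨m, hm, rfl⟩ := hP
      rw [cap_mid m hm (fun h => h0 (by rw [h])) (fun h => hd' (by rw [h]))]
      exact Nat.zero_le _
    · rw [cap_far z hP hA' hB' hW]
      have h1 := hUle z 0 (by omega)
      have h2 := hecc z 0 (by omega)
      omega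
  -- cap is dominating
  have hdomc : ∀ u, Hears G cap u := by
    intro u
    by_cases hA' : u = a
    · refine ⟨a, by rw [cap_a], ?_⟩
      rw [hA', SimpleGraph.dist_self, cap_a]
      omega
    by_cases hB' : u = b
    · refine ⟨b, by rw [cap_b], ?_⟩
      rw [hB', SimpleGraph.dist_self, cap_b]
      omega
    by_cases hW : G.Adj u a ∧ G.Adj u b
    · refine ⟨a, by rw [cap_a], ?_⟩
      rw [cap_a]
      have h1 : G.dist a u = 1 := SimpleGraph.dist_eq_one_iff_adj.2 hW.1.symm
      omega
    by_cases hnear : ∃ k, k ≤ d ∧ G.dist u (v k) ≤ 1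
    · obtain ⟨k, hk, hdk⟩ := hnear
      by_cases hD0 : G.dist (v 0) u ≤ i + G.dist a (v i) - 1
      · exact ⟨v 0, by rw [cap_v0]; omega, by rw [cap_v0]; omega⟩
      · refine ⟨v d, by rw [cap_vd]; omega, ?_⟩
        rw [cap_vd]
        have t1 := hconn.dist_triangle (u := v 0) (v := v k) (w := u)
        have t2 := hconn.dist_triangle (u := v d) (v := v k) (w := u)
        rw [hdv 0 k (by omega) hk] at t1
        rw [hdv d k le_rfl hk] at t2
        have t3 : G.dist (v k) u ≤ 1 := by rw [SimpleGraph.dist_comm]; exact hdk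
        omega
    · have hP : ¬ ∃ k, k ≤ d ∧ u = v k := by
        rintro ⟨k, hk, rfl⟩
        exact hnear ⟨k, hk, by rw [SimpleGraph.dist_self]; omega⟩
      have hU2 : 2 ≤ U u := by
        refine Finset.le_inf' _ _ ?_
        intro k hk
        have hk' : k ≤ d := by
          have := Finset.mem_range.1 hk
          omega
        have h1 : ¬ G.dist u (v k) ≤ 1 := fun h => hnear ⟨k, hk', h⟩
        omega
      refine ⟨u, ?_, ?_⟩
      · rw [cap_far u hP hA' hB' hW]; omega
      · rw [SimpleGraph.dist_self]; exact Nat.zero_le _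
  have hdombc : IsDomBroadcast G cap := ⟨hbc, hdomc⟩
  -- the cost lower bound for every dominating broadcast below cap
  have hlb : ∀ g : V → ℕ, (∀ z, g z ≤ cap z) → (∀ u, Hears G g u) → d + 1 ≤ cost g := by
    intro g hg hdg
    have hpathonly : ∀ k, k ≤ d → ∀ w, 1 ≤ g w → G.dist w (v k) ≤ g w →
        w = v 0 ∨ w = v d := by
      intro k hk w h1 h2
      by_cases h0 : w = v 0
      · exact Or.inl h0
      by_cases hd' : w = v d
      · exact Or.inr hd'
      exfalso
      have hgc := hg w
      by_cases hA' : w = a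
      · subst hA'
        rw [cap_a] at hgc
        have h3 := hDa k hk
        omega
      by_cases hB' : w = b
      · subst hB'
        rw [cap_b] at hgc
        have h3 := hDb k hk
        omega
      by_cases hW : G.Adj w a ∧ G.Adj w b
      · rw [cap_w w hW.1 hW.2] at hgc; omega
      by_cases hP : ∃ m, m ≤ d ∧ w = v m
      · obtain ⟨m, hm, rfl⟩ := hP
        rw [cap_mid m hm (fun h => h0 (by rw [h])) (fun h => hd' (by rw [h]))] at hgc
        omega
      · rw [cap_far w hP hA' hB' hW] at hgc
        have h3 := hUle w k hk
        have h4 := hU1 w hP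
        omega
    have h1v0 : 1 ≤ g (v 0) := by
      obtain ⟨w, hw1, hw2⟩ := hdg (v 0)
      rcases hpathonly 0 (by omega) w hw1 hw2 with rfl | rfl
      · exact hw1
      · exfalso
        have hgc := hg (v d)
        rw [cap_vd] at hgc
        rw [hdv d 0 le_rfl (by omega)] at hw2
        omega
    have h1vd : 1 ≤ g (v d) := by
      obtain ⟨w, hw1, hw2⟩ := hdg (v d)
      rcases hpathonly d le_rfl w hw1 hw2 with rfl | rfl
      · exfalso
        have hgc := hg (v 0)
        rw [cap_v0] at hgc
        rw [hdv 0 d (by omega) le_rfl] at hw2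
        omega
      · exact hw1
    have hgap : d ≤ g (v 0) + g (v d) + 1 := by
      have hgc0 := hg (v 0)
      rw [cap_v0] at hgc0
      have hkd : g (v 0) + 1 ≤ d := by omega
      obtain ⟨w, hw1, hw2⟩ := hdg (v (g (v 0) + 1))
      rcases hpathonly (g (v 0) + 1) hkd w hw1 hw2 with rfl | rfl
      · rw [hdv 0 (g (v 0) + 1) (by omega) hkd] at hw2
        omega
      · rw [hdv d (g (v 0) + 1) le_rfl hkd] at hw2
        omega
    obtain ⟨wa, hwa1, hwa2⟩ := hdg a
    obtain ⟨wb, hwb1, hwb2⟩ := hdg b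
    have hwa0 : wa ≠ v 0 := by
      rintro rfl
      have hgc := hg (v 0); rw [cap_v0] at hgc
      rw [SimpleGraph.dist_comm] at hwa2
      have h3 := hDa 0 (by omega)
      omega
    have hwad : wa ≠ v d := by
      rintro rfl
      have hgc := hg (v d); rw [cap_vd] at hgc
      rw [SimpleGraph.dist_comm] at hwa2
      have h3 := hDa d le_rfl
      omega
    have hwb0 : wb ≠ v 0 := by
      rintro rfl
      have hgc := hg (v 0); rw [cap_v0] at hgc
      rw [SimpleGraph.dist_comm] at hwb2
      have h3 := hDb 0 (by omega)
      omega
    have hwbd : wb ≠ v d := by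
      rintro rfl
      have hgc := hg (v d); rw [cap_vd] at hgc
      rw [SimpleGraph.dist_comm] at hwb2
      have h3 := hDb d le_rfl
      omega
    have hcosteq : cost g = Finset.univ.sum g := rfl
    by_cases hww : wa = wb
    · subst hww
      have h2wa : 2 ≤ g wa := by
        by_contra hcon
        push_neg at hcon
        have hwaa : wa ≠ a := by
          rintro rfl
          omega
        have hwab : wa ≠ b := by
          rintro rfl
          rw [SimpleGraph.dist_comm] at hwa2
          omega
        have hd1a : G.dist wa a = 1 := by
          have h0' : G.dist wa a ≠ 0 := fun h => hwaa ((hconn.dist_eq_zero_iff).1 h)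
          omega
        have hd1b : G.dist wa b = 1 := by
          have h0' : G.dist wa b ≠ 0 := fun h => hwab ((hconn.dist_eq_zero_iff).1 h)
          omega
        have hadja' : G.Adj wa a := SimpleGraph.dist_eq_one_iff_adj.1 hd1a
        have hadjb' : G.Adj wa b := SimpleGraph.dist_eq_one_iff_adj.1 hd1b
        have hgc := hg wa
        rw [cap_w wa hadja' hadjb'] at hgc
        omega
      have hne1 : v 0 ∉ ({v d, wa} : Finset V) := by
        simp only [Finset.mem_insert, Finset.mem_singleton]
        push_neg
        exact ⟨hv0d, fun h => hwa0 h.symm⟩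
      have hne2 : v d ∉ ({wa} : Finset V) := by
        simp only [Finset.mem_singleton]
        exact fun h => hwad h.symm
      have hsum : (({v 0, v d, wa} : Finset V)).sum g ≤ cost g := by
        rw [hcosteq]
        exact Finset.sum_le_sum_of_subset (Finset.subset_univ _)
      rw [Finset.sum_insert hne1, Finset.sum_insert hne2, Finset.sum_singleton] at hsum
      omega
    · have hne1 : v 0 ∉ ({v d, wa, wb} : Finset V) := by
        simp only [Finset.mem_insert, Finset.mem_singleton]
        push_neg
        exact ⟨hv0d, fun h => hwa0 h.symm, fun h => hwb0 h.symm⟩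
      have hne2 : v d ∉ ({wa, wb} : Finset V) := by
        simp only [Finset.mem_insert, Finset.mem_singleton]
        push_neg
        exact ⟨fun h => hwad h.symm, fun h => hwbd h.symm⟩
      have hne3 : wa ∉ ({wb} : Finset V) := by
        simp only [Finset.mem_singleton]
        exact hww
      have hsum : (({v 0, v d, wa, wb} : Finset V)).sum g ≤ cost g := by
        rw [hcosteq]
        exact Finset.sum_le_sum_of_subset (Finset.subset_univ _)
      rw [Finset.sum_insert hne1, Finset.sum_insert hne2, Finset.sum_insert hne3,
        Finset.sum_singleton] at hsum
      omega
  obtain ⟨g, hgle, hgmin⟩ := exists_min_dom_le G (cost cap) cap le_rfl hdombc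
  have hcost : d + 1 ≤ cost g := hlb g hgle hgmin.1.2
  have hmem : cost g ∈ {n | ∃ f : V → ℕ, IsMinDomBroadcast G f ∧ cost f = n} :=
    ⟨g, hgmin, rfl⟩
  have hbdd : BddAbove {n | ∃ f : V → ℕ, IsMinDomBroadcast G f ∧ cost f = n} := by
    refine ⟨∑ x, ecc G x, ?_⟩
    rintro n ⟨f, hf, rfl⟩
    exact Finset.sum_le_sum (fun x _ => hf.1.1 x)
  have hfin : cost g ≤ upperBroadcastNum G := le_csSup hbdd hmem
  rw [hdiam]
  have : upperBroadcastNum G = upperBroadcastNum G := rfl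
  omega

end AuxLemmas


/-- an independent set of size 2 in some `T_i` not dominating `v i`
forces `Γ_b(T) > diam(T)`. -/
theorem stmt9 {V : Type*} [Fintype V] [DecidableEq V] (G : SimpleGraph V)
    [DecidableRel G.Adj] (hT : G.IsTree) (d : ℕ) (v : ℕ → V)
    (hdiam : diam G = d)
    (hadj : ∀ i < d, G.Adj (v i) (v (i + 1)))
    (hinj : ∀ i ≤ d, ∀ j ≤ d, v i = v j → i = j)
    (i : ℕ) (hi1 : 2 ≤ i) (hi2 : i ≤ d - 2)
    (S : Finset V) (hcard : S.card = 2) (hind : IsIndepSet G S)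
    (hsub : ↑S ⊆ sideTree G d v i)
    (hnotdom : v i ∉ S ∧ ∀ s ∈ S, ¬ G.Adj s (v i)) :
    diam G < upperBroadcastNum G := by
  obtain ⟨a, b, hne, rfl⟩ := Finset.card_eq_two.1 hcard
  have hma : a ∈ ({a, b} : Finset V) := by simp
  have hmb : b ∈ ({a, b} : Finset V) := by simp
  have hA : a ∈ sideTree G d v i := hsub hma
  have hB : b ∈ sideTree G d v i := hsub hmb
  have hnadj : ¬ G.Adj a b := hind a hma b hmb hne
  have hconn := hT.isConnected
  have hid : i ≤ d := le_trans hi2 (Nat.sub_le d 2)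
  have ha2 : 2 ≤ G.dist a (v i) := by
    have h0 : G.dist a (v i) ≠ 0 := by
      intro h
      have h' : a = v i := (hconn.dist_eq_zero_iff).1 h
      exact hnotdom.1 (h' ▸ hma)
    have h1 : G.dist a (v i) ≠ 1 :=
      fun h => hnotdom.2 a hma (SimpleGraph.dist_eq_one_iff_adj.1 h)
    omega
  have hb2 : 2 ≤ G.dist b (v i) := by
    have h0 : G.dist b (v i) ≠ 0 := by
      intro h
      have h' : b = v i := (hconn.dist_eq_zero_iff).1 h
      exact hnotdom.1 (h' ▸ hmb)
    have h1 : G.dist b (v i) ≠ 1 :=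
      fun h => hnotdom.2 b hmb (SimpleGraph.dist_eq_one_iff_adj.1 h)
    omega
  rcases le_total (G.dist a (v i)) (G.dist b (v i)) with h | h
  · exact aux_main G hT d v hdiam hadj hinj i hid a b hA hB hnadj hne ha2 hb2 h
  · exact aux_main G hT d v hdiam hadj hinj i hid b a hB hA
      (hind b hmb a hma hne.symm) hne.symm hb2 ha2 h

end AJC
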